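/- For every integer n ≥ 1, the multiplicative gain satisfies 0 ≤ χ_n ≤ 1 − 2^n̂/(n + 1) if n is odd, 0 ≤ χ_n ≤ 1 − 2^n̂/n if n is even, and in either case χ_n < 1/2. -/

import Mathlib

/-- A finite subset of the hypercube `Q_n = (ZMod 2)^n` is dominating if every point of the
hypercube is at Hamming distance at most 1 from some element of the subset. -/
def IsDominating {n : ℕ} (Δ : Finset (Fin n → ZMod 2)) : Prop :=
  ∀ y : Fin n → ZMod 2, ∃ x ∈ Δ, hammingDist x y ≤ 1

/-- The minimal domination number `γ_n` of the `n`-dimensional hypercube. -/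
noncomputable def gamma (n : ℕ) : ℕ :=
  sInf {k | ∃ Δ : Finset (Fin n → ZMod 2), IsDominating Δ ∧ Δ.card = k}

/-- The multiplicative gain `χ_n = 1 - γ_n · 2^(n̂ - n)`, where `n̂ = ⌊log₂ (n+1)⌋`. -/
noncomputable def chi (n : ℕ) : ℚ :=
  1 - (gamma n : ℚ) * (2 : ℚ) ^ ((Nat.log 2 (n + 1) : ℤ) - (n : ℤ))



section AuxDomination

open Finset


variable {n : ℕ}

private lemma zadd1 : ∀ a : ZMod 2, a + 1 ≠ a := by decide
private lemma zne : ∀ a b : ZMod 2, a ≠ b → a = b + 1 := by decide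
private lemma zaa : ∀ a b : ZMod 2, a + b + b = a := by decide
private lemma zbb : ∀ a b : ZMod 2, a + (b + a) = b := by decide

/-- closed ball of radius 1 -/
def hball (v : Fin n → ZMod 2) : Finset (Fin n → ZMod 2) :=
  univ.filter (fun u => hammingDist u v ≤ 1)

lemma mem_hball {u v : Fin n → ZMod 2} : u ∈ hball v ↔ hammingDist u v ≤ 1 := by
  simp [hball]

lemma hdist_filter (u v : Fin n → ZMod 2) :
    hammingDist u v = (univ.filter fun i => u i ≠ v i).card := rfl

lemma dist_update (v : Fin n → ZMod 2) (i : Fin n) :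
    hammingDist (Function.update v i (v i + 1)) v = 1 := by
  rw [hdist_filter]
  have : (univ.filter fun j => Function.update v i (v i + 1) j ≠ v j) = {i} := by
    ext j
    simp only [mem_filter, mem_univ, true_and, mem_singleton]
    constructor
    · intro h
      by_contra hji
      exact h (by rw [Function.update_of_ne hji])
    · rintro rfl
      rw [Function.update_self]
      exact zadd1 _
  rw [this, card_singleton]

lemma hball_eq (v : Fin n → ZMod 2) :
    hball v = insert v ((univ : Finset (Fin n)).image fun i => Function.update v i (v i + 1)) := by
  ext u
  simp only [mem_hball, mem_insert, mem_image, mem_univ, true_and]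
  constructor
  · intro h
    rw [hdist_filter] at h
    rcases Nat.le_one_iff_eq_zero_or_eq_one.mp h with h0 | h1
    · left
      rw [Finset.card_eq_zero, Finset.filter_eq_empty_iff] at h0
      funext j
      have := h0 (mem_univ j)
      simpa using this
    · right
      obtain ⟨i, hi⟩ := Finset.card_eq_one.mp h1
      refine ⟨i, funext fun j => ?_⟩
      by_cases hji : j = i
      · subst hji
        have hne2 : u j ≠ v j := by
          have : j ∈ univ.filter fun i => u i ≠ v i := by rw [hi]; exact mem_singleton_self j
          simpa using this
        rw [Function.update_self]
        exact (zne _ _ hne2).symm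
      · rw [Function.update_of_ne hji]
        by_contra hne'
        have : j ∈ ({i} : Finset (Fin n)) := by rw [← hi]; simp [Ne.symm hne']
        exact hji (mem_singleton.mp this)
  · rintro (rfl | ⟨i, rfl⟩)
    · simp [hammingDist_self]
    · rw [dist_update]

lemma card_hball (v : Fin n → ZMod 2) : (hball v).card = n + 1 := by
  rw [hball_eq, card_insert_of_notMem, Finset.card_image_of_injective, card_univ,
    Fintype.card_fin]
  · intro i j hij
    by_contra hne'
    have h2 := congrFun hij i
    simp only [Function.update_self, Function.update_of_ne hne'] at h2
    exact zadd1 _ h2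
  · intro hv
    obtain ⟨i, _, hi⟩ := Finset.mem_image.mp hv
    have := congrFun hi i
    rw [Function.update_self] at this
    exact zadd1 _ this

lemma hdist_add_right (x y z : Fin n → ZMod 2) :
    hammingDist (x + z) (y + z) = hammingDist x y := by
  rw [hdist_filter, hdist_filter]
  congr 1
  apply Finset.filter_congr
  intro i _
  simp [Pi.add_apply, add_left_inj]

private lemma zab : ∀ a b : ZMod 2, a + (a + b) = b := by decide
private lemma zc : ∀ a b x : ZMod 2, x = a → a ≠ b → x + (a + b) ≠ a := by decide
private lemma zd : ∀ a b x : ZMod 2, x ≠ a → a ≠ b → x + (a + b) = a := by decide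

lemma even_card_inter {c v : Fin n → ZMod 2} (hcv : c ≠ v) :
    Even ((hball c ∩ hball v).card) := by
  classical
  obtain ⟨i, hi⟩ := Function.ne_iff.mp hcv
  set w : Fin n → ZMod 2 := c + v with hw
  have hvw : v + w = c := by funext j; exact zbb (v j) (c j)
  have hcw : c + w = v := by funext j; exact zab (c j) (v j)
  have hww : ∀ u : Fin n → ZMod 2, u + w + w = u := by
    intro u; funext j; exact zaa (u j) (w j)
  set s := hball c ∩ hball v with hs
  have hmem : ∀ u ∈ s, u + w ∈ s := by
    intro u hu
    rw [hs, mem_inter, mem_hball, mem_hball] at hu ⊢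
    constructor
    · rw [← hvw, hdist_add_right]; exact hu.2
    · rw [← hcw, hdist_add_right]; exact hu.1
  have key : (s.filter fun u => u i = c i).card = (s.filter fun u => ¬ u i = c i).card := by
    apply Finset.card_bij' (i := fun u _ => u + w) (j := fun u _ => u + w)
    · intro u hu
      rw [mem_filter] at hu ⊢
      refine ⟨hmem u hu.1, ?_⟩
      show ¬ (u i + w i = c i)
      exact zc (c i) (v i) (u i) hu.2 hi
    · intro u hu
      rw [mem_filter] at hu ⊢
      refine ⟨hmem u hu.1, ?_⟩
      show u i + w i = c i
      exact zd (c i) (v i) (u i) hu.2 hi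
    · intro u _; exact hww u
    · intro u _; exact hww u
  have hsplit : (s.filter fun u => u i = c i).card
      + (s.filter fun u => ¬ u i = c i).card = s.card := by
    simpa using Finset.card_filter_add_card_filter_not (s := s)
      (p := fun u => u i = c i)
  rw [← hsplit, ← key]
  exact Even.add_self _

variable (Δ : Finset (Fin n → ZMod 2))

/-- number of codewords dominating u -/
def fdom (u : Fin n → ZMod 2) : ℕ := (Δ.filter fun c => hammingDist c u ≤ 1).card

lemma sum_card_filter (U : Finset (Fin n → ZMod 2)) :
    ∑ u ∈ U, (Δ.filter fun c => hammingDist c u ≤ 1).card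
      = ∑ c ∈ Δ, (U.filter fun u => hammingDist c u ≤ 1).card := by
  simp_rw [Finset.card_filter]
  exact Finset.sum_comm

lemma one_le_fdom (hdom : IsDominating Δ) (u : Fin n → ZMod 2) : 1 ≤ fdom Δ u := by
  obtain ⟨x, hx, hdx⟩ := hdom u
  exact Finset.card_pos.mpr ⟨x, Finset.mem_filter.mpr ⟨hx, hdx⟩⟩

lemma fdom_le (u : Fin n → ZMod 2) : fdom Δ u + (hball u \ Δ).card = n + 1 := by
  have h1 : Δ.filter (fun c => hammingDist c u ≤ 1) = hball u ∩ Δ := by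
    ext c
    simp [mem_hball, Finset.mem_inter, Finset.mem_filter, and_comm]
  rw [fdom, h1, ← card_hball u, ← Finset.card_sdiff_add_card_inter (hball u) Δ]
  omega

lemma sum_fdom_univ : ∑ u : Fin n → ZMod 2, fdom Δ u = Δ.card * (n + 1) := by
  calc ∑ u : Fin n → ZMod 2, fdom Δ u
      = ∑ c ∈ Δ, ((univ : Finset (Fin n → ZMod 2)).filter
          fun u => hammingDist c u ≤ 1).card := sum_card_filter Δ univ
    _ = ∑ _c ∈ Δ, (n + 1) := by
        refine Finset.sum_congr rfl fun c _ => ?_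
        have h2 : ((univ : Finset (Fin n → ZMod 2)).filter fun u => hammingDist c u ≤ 1)
            = hball c := by
          ext u; simp [hball, hammingDist_comm]
        rw [h2, card_hball]
    _ = Δ.card * (n + 1) := by rw [Finset.sum_const, smul_eq_mul]

lemma card_Q : (univ : Finset (Fin n → ZMod 2)).card = 2 ^ n := by
  simp [card_univ]

example : True := trivial

lemma parity_step (hE : Even n) (hdom : IsDominating Δ) {v : Fin n → ZMod 2} (hv : v ∉ Δ) :
    n + 2 ≤ ∑ u ∈ hball v, fdom Δ u := by
  have hge : n + 1 ≤ ∑ u ∈ hball v, fdom Δ u := by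
    calc n + 1 = ∑ _u ∈ hball v, 1 := by
          rw [Finset.sum_const, smul_eq_mul, mul_one, card_hball]
      _ ≤ _ := Finset.sum_le_sum fun u _ => one_le_fdom Δ hdom u
  have heven : Even (∑ u ∈ hball v, fdom Δ u) := by
    have h1 : ∑ u ∈ hball v, fdom Δ u
        = ∑ c ∈ Δ, ((hball v).filter fun u => hammingDist c u ≤ 1).card :=
      sum_card_filter Δ (hball v)
    rw [h1]
    apply Finset.even_sum
    intro c hc
    have h2 : ((hball v).filter fun u => hammingDist c u ≤ 1) = hball c ∩ hball v := by
      ext u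
      simp only [Finset.mem_filter, Finset.mem_inter, mem_hball]
      rw [hammingDist_comm u c]
      exact and_comm
    rw [h2]
    exact even_card_inter (fun h => hv (h ▸ hc))
  obtain ⟨a, ha⟩ := heven
  obtain ⟨b, hb⟩ := hE
  omega

lemma sphere_bound (hdom : IsDominating Δ) : 2 ^ n ≤ (n + 1) * Δ.card := by
  have h1 : (2 : ℕ) ^ n = ∑ _u : Fin n → ZMod 2, 1 := by
    rw [Finset.sum_const, smul_eq_mul, mul_one, card_Q]
  calc (2 : ℕ) ^ n = ∑ _u : Fin n → ZMod 2, 1 := h1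
    _ ≤ ∑ u : Fin n → ZMod 2, fdom Δ u := Finset.sum_le_sum fun u _ => one_le_fdom Δ hdom u
    _ = (n + 1) * Δ.card := by rw [sum_fdom_univ, mul_comm]

lemma even_bound (hn2 : 2 ≤ n) (hE : Even n) (hdom : IsDominating Δ) :
    2 ^ n ≤ n * Δ.card := by
  classical
  set γ := Δ.card with hγ
  have hγle : γ ≤ 2 ^ n := by rw [hγ, ← card_Q]; exact Finset.card_le_univ Δ
  -- T = sum over non-codewords of local sums
  have hT1 : (n + 2) * (2 ^ n - γ) ≤ ∑ v ∈ univ \ Δ, ∑ u ∈ hball v, fdom Δ u := by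
    have hcard : (univ \ Δ).card = 2 ^ n - γ := by
      rw [Finset.card_sdiff_of_subset (Finset.subset_univ Δ), card_Q, hγ]
    calc (n + 2) * (2 ^ n - γ) = ∑ _v ∈ univ \ Δ, (n + 2) := by
          rw [Finset.sum_const, smul_eq_mul, hcard, mul_comm]
      _ ≤ _ := Finset.sum_le_sum fun v hv =>
          parity_step Δ hE hdom (Finset.mem_sdiff.mp hv).2
  -- swap the double sum
  have hT2 : ∑ v ∈ univ \ Δ, ∑ u ∈ hball v, fdom Δ u
      = ∑ u : Fin n → ZMod 2, fdom Δ u * (hball u \ Δ).card := by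
    have e1 : ∀ v : Fin n → ZMod 2, ∑ u ∈ hball v, fdom Δ u
        = ∑ u : Fin n → ZMod 2, if hammingDist u v ≤ 1 then fdom Δ u else 0 := by
      intro v
      rw [hball, Finset.sum_filter]
    simp_rw [e1]
    rw [Finset.sum_comm]
    refine Finset.sum_congr rfl fun u _ => ?_
    rw [← Finset.sum_filter, Finset.sum_const, smul_eq_mul]
    have hset : (univ \ Δ).filter (fun v => hammingDist u v ≤ 1) = hball u \ Δ := by
      ext v
      simp only [Finset.mem_filter, Finset.mem_sdiff, Finset.mem_univ, true_and, mem_hball]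
      rw [hammingDist_comm v u]
      exact and_comm
    rw [hset, mul_comm]
  -- pointwise bound
  have hquad : ∀ F : ℤ, 0 ≤ (F - 1) * (F - 2) := by
    intro F
    rcases le_or_gt F 1 with h | h
    · nlinarith [mul_nonneg (by linarith : (0:ℤ) ≤ 1 - F) (by linarith : (0:ℤ) ≤ 2 - F)]
    · exact mul_nonneg (by linarith) (by linarith)
  have hper : ∀ u : Fin n → ZMod 2,
      fdom Δ u * (hball u \ Δ).card ≤ 2 + (n - 2) * fdom Δ u := by
    intro u
    have hfd := fdom_le Δ u
    zify [hn2]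
    have hq := hquad (fdom Δ u : ℤ)
    have : ((hball u \ Δ).card : ℤ) = (n : ℤ) + 1 - fdom Δ u := by
      have := congrArg (fun m : ℕ => (m : ℤ)) hfd
      push_cast at this
      linarith
    nlinarith [hq, this]
  have hT3 : ∑ u : Fin n → ZMod 2, fdom Δ u * (hball u \ Δ).card
      ≤ 2 * 2 ^ n + (n - 2) * (Δ.card * (n + 1)) := by
    calc ∑ u : Fin n → ZMod 2, fdom Δ u * (hball u \ Δ).card
        ≤ ∑ u : Fin n → ZMod 2, (2 + (n - 2) * fdom Δ u) :=
          Finset.sum_le_sum fun u _ => hper u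
      _ = 2 * 2 ^ n + (n - 2) * (Δ.card * (n + 1)) := by
          rw [Finset.sum_add_distrib, ← Finset.mul_sum, sum_fdom_univ,
            Finset.sum_const, smul_eq_mul, card_Q, mul_comm (2 ^ n) 2]
  have hfinal : (n + 2) * (2 ^ n - γ) ≤ 2 * 2 ^ n + (n - 2) * (γ * (n + 1)) := by
    rw [hγ] at hT1 ⊢
    exact le_trans hT1 (hT2 ▸ hT3)
  zify [hγle, hn2] at hfinal ⊢
  have key : (n : ℤ) * 2 ^ n ≤ n * (n * γ) := by nlinarith [hfinal]
  have hnpos : (0 : ℤ) < n := by exact_mod_cast Nat.lt_of_lt_of_le Nat.zero_lt_two hn2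
  exact le_of_mul_le_mul_left key hnpos

section Construction

private lemma zself : ∀ a : ZMod 2, a + a = 0 := by decide
private lemma zval0 : ∀ a : ZMod 2, (a : Fin 2).val = 0 → a = 0 := by decide

lemma exists_dominating (n k : ℕ) (hn : 1 ≤ n) (hk1 : 1 ≤ k) (hkn : 2 ^ k ≤ n + 1) :
    ∃ Δ : Finset (Fin n → ZMod 2), IsDominating Δ ∧ Δ.card = 2 ^ (n - k) := by
  classical
  have h2k : 1 < 2 ^ k := Nat.one_lt_two_pow (by omega)
  have hkn' : k ≤ n := by
    have := Nat.lt_two_pow_self (n := k)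
    omega
  -- the columns of the parity-check matrix
  set e : (Fin k → Fin 2) ≃ Fin (2 ^ k) := finFunctionFinEquiv with he
  set v : Fin n → (Fin k → ZMod 2) := fun i =>
    (e.symm (if h : i.val + 1 < 2 ^ k then ⟨i.val + 1, h⟩ else ⟨1, h2k⟩) : Fin k → Fin 2)
    with hv
  -- the syndrome map
  set φ : (Fin n → ZMod 2) → (Fin k → ZMod 2) := fun x => ∑ i : Fin n, x i • v i with hφ
  have hadd : ∀ x y, φ (x + y) = φ x + φ y := by
    intro x y
    rw [hφ]
    simp only [Pi.add_apply, add_smul]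
    rw [Finset.sum_add_distrib]
  have hzero : φ 0 = 0 := by simp [hφ]
  have hsingle : ∀ i : Fin n, φ (Function.update (0 : Fin n → ZMod 2) i 1) = v i := by
    intro i
    rw [hφ]
    simp only []
    rw [Finset.sum_eq_single i]
    · rw [Function.update_self, one_smul]
    · intro j _ hji
      rw [Function.update_of_ne hji, Pi.zero_apply, zero_smul]
    · intro h
      exact absurd (Finset.mem_univ i) h
  -- every nonzero syndrome is a column
  have hvt : ∀ t : Fin k → ZMod 2, t ≠ 0 → ∃ i : Fin n, v i = t := by
    intro t ht
    have hsum : ((e t : Fin (2 ^ k)) : ℕ) = ∑ j : Fin k, ZMod.val (t j) * 2 ^ (j : ℕ) :=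
      finFunctionFinEquiv_apply t
    have hm0 : ((e t : Fin (2 ^ k)) : ℕ) ≠ 0 := by
      intro h0
      apply ht
      rw [h0] at hsum
      funext j
      have hj : ZMod.val (t j) * 2 ^ (j : ℕ) = 0 :=
        (Finset.sum_eq_zero_iff.mp hsum.symm) j (Finset.mem_univ j)
      have hp : 0 < 2 ^ (j : ℕ) := Nat.pow_pos (by norm_num)
      have hj0 : ZMod.val (t j) = 0 := by
        rcases Nat.mul_eq_zero.mp hj with h | h
        · exact h
        · omega
      exact (ZMod.val_eq_zero (t j)).mp hj0
    have hmlt : ((e t : Fin (2 ^ k)) : ℕ) - 1 < n := by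
      have := (e t).isLt
      omega
    refine ⟨⟨((e t : Fin (2 ^ k)) : ℕ) - 1, hmlt⟩, ?_⟩
    simp only [hv, Fin.val_mk]
    have hlt : (((e t : Fin (2 ^ k)) : ℕ) - 1) + 1 < 2 ^ k := by
      have := (e t).isLt
      omega
    rw [dif_pos hlt]
    have harg : (⟨(((e t : Fin (2 ^ k)) : ℕ) - 1) + 1, hlt⟩ : Fin (2 ^ k)) = e t := by
      apply Fin.ext
      rw [Fin.val_mk]
      omega
    rw [harg]; exact e.symm_apply_apply t
  -- the code
  set Δ : Finset (Fin n → ZMod 2) := univ.filter (fun x => φ x = 0) with hΔ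
  have hdomΔ : IsDominating Δ := by
    intro y
    by_cases h0 : φ y = 0
    · exact ⟨y, Finset.mem_filter.mpr ⟨Finset.mem_univ y, h0⟩, by
        rw [hammingDist_self]; omega⟩
    · obtain ⟨i, hi⟩ := hvt (φ y) h0
      refine ⟨y + Function.update (0 : Fin n → ZMod 2) i 1, ?_, ?_⟩
      · refine Finset.mem_filter.mpr ⟨Finset.mem_univ _, ?_⟩
        rw [hadd, hsingle, hi]
        funext j
        exact zself _
      · have hupd : y + Function.update (0 : Fin n → ZMod 2) i 1 = Function.update y i (y i + 1) := by
          funext j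
          by_cases hji : j = i
          · subst hji
            show y j + Function.update (0 : Fin n → ZMod 2) j 1 j = _
            rw [Function.update_self, Function.update_self]
          · show y j + Function.update (0 : Fin n → ZMod 2) i 1 j = _
            rw [Function.update_of_ne hji, Function.update_of_ne hji, Pi.zero_apply, add_zero]
        rw [hupd, dist_update]
  have hfib : ∀ t : Fin k → ZMod 2,
      ((univ : Finset (Fin n → ZMod 2)).filter fun x => φ x = t).card = Δ.card := by
    intro t
    have hxt : ∃ xt, φ xt = t := by
      by_cases h0 : t = 0
      · exact ⟨0, by rw [hzero, h0]⟩
      · obtain ⟨i, hi⟩ := hvt t h0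
        exact ⟨Function.update (0 : Fin n → ZMod 2) i 1, by rw [hsingle, hi]⟩
    obtain ⟨xt, hxt⟩ := hxt
    have hww : ∀ y : Fin n → ZMod 2, y + xt + xt = y := by
      intro y; funext j; exact zaa _ _
    apply Finset.card_bij' (i := fun y _ => y + xt) (j := fun y _ => y + xt)
    · intro y hy
      rw [hΔ, Finset.mem_filter]
      refine ⟨Finset.mem_univ _, ?_⟩
      rw [hadd, hxt, (Finset.mem_filter.mp hy).2]
      funext j
      exact zself _
    · intro y hy
      rw [Finset.mem_filter]
      refine ⟨Finset.mem_univ _, ?_⟩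
      have h0 : φ y = 0 := by
        have := (Finset.mem_filter.mp (hΔ ▸ hy)).2
        exact this
      rw [hadd, hxt, h0, zero_add]
    · intro y _; exact hww y
    · intro y _; exact hww y
  have hcount : 2 ^ n = 2 ^ k * Δ.card := by
    have h1 : (univ : Finset (Fin n → ZMod 2)).card
        = ∑ t ∈ (univ : Finset (Fin k → ZMod 2)),
            ((univ : Finset (Fin n → ZMod 2)).filter fun x => φ x = t).card :=
      Finset.card_eq_sum_card_fiberwise (fun x _ => Finset.mem_univ (φ x))
    rw [card_Q] at h1
    rw [h1]
    simp_rw [hfib]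
    rw [Finset.sum_const, smul_eq_mul, card_Q]
  refine ⟨Δ, hdomΔ, ?_⟩
  have h2 : 2 ^ k * Δ.card = 2 ^ k * 2 ^ (n - k) := by
    rw [← hcount, ← pow_add]
    congr 1
    omega
  exact Nat.eq_of_mul_eq_mul_left (by positivity) h2

end Construction

end AuxDomination

/-- For `n ≥ 1`: `0 ≤ χ_n`; `χ_n ≤ 1 - 2^n̂/(n+1)` for `n` odd;
`χ_n ≤ 1 - 2^n̂/n` for `n` even; and in either case `χ_n < 1/2`. -/
theorem stmt_9 (n : ℕ) (hn : 1 ≤ n) :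
    0 ≤ chi n ∧
    (Odd n → chi n ≤ 1 - (2 : ℚ) ^ Nat.log 2 (n + 1) / ((n : ℚ) + 1)) ∧
    (Even n → chi n ≤ 1 - (2 : ℚ) ^ Nat.log 2 (n + 1) / (n : ℚ)) ∧
    chi n < 1 / 2 := by

  have hk1 : 1 ≤ Nat.log 2 (n + 1) := Nat.log_pos (by norm_num) (by omega)
  have hk2 : 2 ^ Nat.log 2 (n + 1) ≤ n + 1 := Nat.pow_log_le_self 2 (by omega)
  have hk3 : n + 1 < 2 ^ (Nat.log 2 (n + 1) + 1) := Nat.lt_pow_succ_log_self (by norm_num) (n + 1)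
  set k := Nat.log 2 (n + 1) with hk
  have hkn : k ≤ n := by
    have := Nat.lt_two_pow_self (n := k)
    omega
  obtain ⟨Δc, hΔc, hΔccard⟩ := exists_dominating n k hn hk1 hk2
  have hmem : 2 ^ (n - k) ∈
      {m | ∃ Δ : Finset (Fin n → ZMod 2), IsDominating Δ ∧ Δ.card = m} := ⟨Δc, hΔc, hΔccard⟩
  have hγle : gamma n ≤ 2 ^ (n - k) := Nat.sInf_le hmem
  have hγmem : gamma n ∈
      {m | ∃ Δ : Finset (Fin n → ZMod 2), IsDominating Δ ∧ Δ.card = m} :=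
    Nat.sInf_mem ⟨2 ^ (n - k), hmem⟩
  obtain ⟨Δ₀, hdom₀, hcard₀⟩ := hγmem
  have hsph : 2 ^ n ≤ (n + 1) * gamma n := by
    have := sphere_bound Δ₀ hdom₀
    rwa [hcard₀] at this
  have hγpos : 1 ≤ gamma n := by
    rcases Nat.eq_zero_or_pos (gamma n) with h | h
    · rw [h, mul_zero] at hsph
      have : 0 < 2 ^ n := Nat.pow_pos (n := n) (by norm_num)
      omega
    · exact h
  -- rational versions
  have hApos : (0 : ℚ) < 2 ^ n := by positivity
  have hKpos : (0 : ℚ) < 2 ^ k := by positivity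
  have hchi : chi n = 1 - (gamma n : ℚ) * ((2 : ℚ) ^ k / (2 : ℚ) ^ n) := by
    rw [chi]
    congr 2
    rw [← hk, zpow_sub₀ (two_ne_zero), zpow_natCast, zpow_natCast]
  have hq1 : (gamma n : ℚ) * 2 ^ k ≤ 2 ^ n := by
    have h1 : gamma n * 2 ^ k ≤ 2 ^ n := by
      calc gamma n * 2 ^ k ≤ 2 ^ (n - k) * 2 ^ k := Nat.mul_le_mul_right _ hγle
        _ = 2 ^ n := by rw [← pow_add]; congr 1; omega
    exact_mod_cast h1
  have hq2 : (2 : ℚ) ^ n ≤ ((n : ℚ) + 1) * (gamma n : ℚ) := by exact_mod_cast hsph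
  have hq4 : ((n : ℚ) + 1) < 2 * 2 ^ k := by
    have : ((n : ℚ) + 1) < 2 ^ (k + 1) := by exact_mod_cast hk3
    rw [pow_succ] at this
    linarith
  have hq5 : (1 : ℚ) ≤ (gamma n : ℚ) := by exact_mod_cast hγpos
  refine ⟨?_, ?_, ?_, ?_⟩
  · rw [hchi, sub_nonneg, ← mul_div_assoc]
    exact (div_le_one hApos).mpr hq1
  · intro _
    rw [hchi]
    apply sub_le_sub_left
    rw [← mul_div_assoc, div_le_div_iff₀ (by positivity) hApos]
    have := mul_le_mul_of_nonneg_left hq2 hKpos.le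
    nlinarith [this]
  · intro heven
    have hnn : 2 ≤ n := by
      obtain ⟨r, hr⟩ := heven
      omega
    have hq3 : (2 : ℚ) ^ n ≤ (n : ℚ) * (gamma n : ℚ) := by
      have := even_bound Δ₀ hnn heven hdom₀
      rw [hcard₀] at this
      exact_mod_cast this
    rw [hchi]
    apply sub_le_sub_left
    have hnpos : (0 : ℚ) < (n : ℚ) := by
      have : (0 : ℚ) < (2 : ℚ) := by norm_num
      exact_mod_cast Nat.lt_of_lt_of_le Nat.zero_lt_two hnn
    rw [← mul_div_assoc, div_le_div_iff₀ hnpos hApos]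
    have := mul_le_mul_of_nonneg_left hq3 hKpos.le
    nlinarith [this]
  · rw [hchi, ← mul_div_assoc]
    have hlt : (1 : ℚ) / 2 < (gamma n : ℚ) * 2 ^ k / 2 ^ n := by
      rw [div_lt_div_iff₀ (by norm_num) hApos]
      nlinarith [hq2, hq4, hq5]
    linarith
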